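/- Let m >= 2, let K be a finite field with 2^m elements, regarded as a vector space over F_2, and let alpha be a generator of the multiplicative group of K. Then for every i with 0 <= i <= 2^m - 2, the m elements alpha^{i+1} - alpha^i, alpha^{i+2} - alpha^i, ..., alpha^{i+m} - alpha^i are linearly independent over F_2. -/

import Mathlib

open Polynomial

/-- Let `K` be a finite field with `2^m` elements (`m ≥ 2`), viewed as a vector space
over `F_2 = ZMod 2` (any field of cardinality `2^m` has characteristic 2, hence carries
a unique `ZMod 2`-algebra structure, supplied here as an instance), and let `α` be a
generator of the multiplicative group `Kˣ`.  Then for every `0 ≤ i ≤ 2^m - 2`, the `m`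
elements `α^{i+1} - α^i, …, α^{i+m} - α^i` are linearly independent over `F_2`. -/
theorem stmt4 (m : ℕ) (hm : 2 ≤ m) (K : Type) [Field K] [Fintype K]
    [Algebra (ZMod 2) K]
    (hK : Fintype.card K = 2 ^ m)
    (α : Kˣ) (hα : ∀ x : Kˣ, x ∈ Subgroup.zpowers α)
    (i : ℕ) (hi : i ≤ 2 ^ m - 2) :
    LinearIndependent (ZMod 2)
      (fun j : Fin m => (α : K) ^ (i + (j : ℕ) + 1) - (α : K) ^ i) := by
  have hα0 : (α : K) ≠ 0 := Units.ne_zero α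
  have hint : IsIntegral (ZMod 2) (α : K) := IsIntegral.of_finite _ _
  have htop : IntermediateField.adjoin (ZMod 2) {(α : K)} = ⊤ := by
    rw [eq_top_iff]
    intro x _
    rcases eq_or_ne x 0 with rfl | hx
    · exact zero_mem _
    · obtain ⟨n, hn⟩ := hα (Units.mk0 x hx)
      have hxn : x = (α : K) ^ n := by
        have := congrArg (Units.val) hn
        simpa using this.symm
      rw [hxn]
      exact zpow_mem (IntermediateField.mem_adjoin_simple_self _ _) n
  have hfr : Module.finrank (ZMod 2) K = m := by
    have h := Module.card_eq_pow_finrank (K := ZMod 2) (V := K)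
    rw [ZMod.card, hK] at h
    exact (Nat.pow_right_injective le_rfl h.symm)
  have hdeg : (minpoly (ZMod 2) (α : K)).natDegree = m := by
    have h := IntermediateField.adjoin.finrank hint
    rw [htop, IntermediateField.finrank_top'] at h
    rw [← h, hfr]
  rw [Fintype.linearIndependent_iff]
  intro g hg
  set s : ZMod 2 := ∑ j, g j with hs
  have h1 : ∑ j : Fin m, g j • ((α : K) ^ ((j : ℕ) + 1) - 1) = 0 := by
    have key : (0 : K) = (α : K) ^ i * ∑ j : Fin m, g j • ((α : K) ^ ((j : ℕ) + 1) - 1) := by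
      rw [Finset.mul_sum, ← hg]
      apply Finset.sum_congr rfl
      intro j _
      rw [mul_smul_comm]
      congr 1
      rw [mul_sub, mul_one, ← pow_add]
      ring_nf
    rcases mul_eq_zero.mp key.symm with h | h
    · exact absurd h (pow_ne_zero _ hα0)
    · exact h
  set q : Polynomial (ZMod 2) :=
    (∑ j : Fin m, Polynomial.C (g j) * Polynomial.X ^ ((j : ℕ) + 1)) - Polynomial.C s with hq
  have haq : Polynomial.aeval (α : K) q = 0 := by
    rw [hq, map_sub, map_sum, Polynomial.aeval_C, hs, map_sum]
    rw [← h1]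
    rw [← Finset.sum_sub_distrib]
    apply Finset.sum_congr rfl
    intro j _
    rw [smul_sub, Algebra.smul_def, Algebra.smul_def, mul_one, map_mul, map_pow,
      Polynomial.aeval_C, Polynomial.aeval_X]
  have hcoeff : ∀ j : Fin m, q.coeff ((j : ℕ) + 1) = g j := by
    intro j
    rw [hq, Polynomial.coeff_sub, Polynomial.finset_sum_coeff]
    rw [Finset.sum_eq_single j]
    · simp
    · intro b _ hb
      rw [Polynomial.coeff_C_mul, Polynomial.coeff_X_pow, if_neg, mul_zero]
      intro h
      exact hb (Fin.ext (by omega))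
    · intro h
      exact absurd (Finset.mem_univ j) h
  have hqdeg : q.natDegree ≤ m := by
    apply le_trans (Polynomial.natDegree_sub_le _ _)
    apply max_le
    · apply Polynomial.natDegree_sum_le_of_forall_le
      intro j _
      refine le_trans (Polynomial.natDegree_C_mul_le _ _) ?_
      rw [Polynomial.natDegree_X_pow]
      omega
    · simp
  have hq0 : q = 0 := by
    by_contra hne
    have hdvd := minpoly.dvd (ZMod 2) (α : K) haq
    have hp0 : minpoly (ZMod 2) (α : K) ≠ 0 := minpoly.ne_zero hint
    obtain ⟨r, hr⟩ := hdvd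
    have hr0 : r ≠ 0 := by
      rintro rfl
      rw [mul_zero] at hr
      exact hne hr
    have hqd : q.natDegree = m :=
      le_antisymm hqdeg (hdeg ▸ Polynomial.natDegree_le_of_dvd ⟨r, hr⟩ hne)
    have hmul : q.natDegree = m + r.natDegree := by
      rw [hr, Polynomial.natDegree_mul hp0 hr0, hdeg]
    have hrdeg : r.natDegree = 0 := by omega
    have hev : q.eval 1 = 0 := by
      rw [hq]
      simp [Polynomial.eval_finset_sum, hs]
    have hpev : (minpoly (ZMod 2) (α : K)).eval 1 = 0 := by
      rw [hr, Polynomial.eval_mul] at hev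
      rcases mul_eq_zero.mp hev with h | h
      · exact h
      · exfalso
        apply hr0
        rw [Polynomial.eq_C_of_natDegree_eq_zero hrdeg] at h ⊢
        rw [Polynomial.eval_C] at h
        rw [h, map_zero]
    have hd1 : (minpoly (ZMod 2) (α : K)).degree = 1 :=
      Polynomial.degree_eq_one_of_irreducible_of_root (minpoly.irreducible hint) hpev
    have : (minpoly (ZMod 2) (α : K)).natDegree = 1 :=
      Polynomial.natDegree_eq_of_degree_eq_some hd1
    omega
  intro j
  rw [← hcoeff j, hq0, Polynomial.coeff_zero]
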